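/- For every real constant c > 0, the function h(α) = α · (2^(c/α) − 1)² is strictly antitone on (0, ∞); moreover h(α) → +∞ as α → 0⁺ and h(α) → 0 as α → +∞. -/

import Mathlib

open Filter Set Real

lemma key_slope (L : ℝ) (hL : 0 < L) {y x : ℝ} (hy : 0 < y) (hxy : y < x) :
    x * (Real.exp (L * y) - 1) < y * (Real.exp (L * x) - 1) := by
  have hx : 0 < x := hy.trans hxy
  have ha : (0:ℝ) < 1 - y / x := by
    have : y / x < 1 := (div_lt_one hx).2 hxy
    linarith
  have hb : (0:ℝ) < y / x := div_pos hy hx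
  have hne : (0:ℝ) ≠ L * x := by positivity
  have h := strictConvexOn_exp.2 (mem_univ (0:ℝ)) (mem_univ (L * x)) hne ha hb
    (by field_simp; ring)
  have hcomb : (1 - y / x) • (0:ℝ) + (y / x) • (L * x) = L * y := by
    simp only [smul_eq_mul, mul_zero, zero_add]
    rw [div_mul_eq_mul_div, div_eq_iff hx.ne']; ring
  rw [hcomb] at h
  simp only [smul_eq_mul, Real.exp_zero] at h
  have hx' : x ≠ 0 := ne_of_gt hx
  have h2 : x * Real.exp (L * y) < x * ((1 - y / x) * 1 + y / x * Real.exp (L * x)) :=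
    (mul_lt_mul_iff_right₀ hx).2 h
  have h3 : x * ((1 - y / x) * 1 + y / x * Real.exp (L * x))
      = (x - y) + y * Real.exp (L * x) := by field_simp
  nlinarith [h2, h3]

theorem strictAntiOn_alpha_mul_sq
    (c : ℝ) (hc : 0 < c) :
    StrictAntiOn (fun α : ℝ => α * ((2 : ℝ) ^ (c / α) - 1) ^ 2) (Ioi (0 : ℝ)) ∧
    Tendsto (fun α : ℝ => α * ((2 : ℝ) ^ (c / α) - 1) ^ 2)
      (nhdsWithin 0 (Ioi 0)) atTop ∧
    Tendsto (fun α : ℝ => α * ((2 : ℝ) ^ (c / α) - 1) ^ 2) atTop (nhds 0) := by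
  set L := Real.log 2 with hLdef
  have hL : 0 < L := Real.log_pos (by norm_num)
  have hrw : ∀ t : ℝ, (2:ℝ) ^ t = Real.exp (L * t) := fun t =>
    Real.rpow_def_of_pos (by norm_num) t
  refine ⟨?_, ?_, ?_⟩
  · intro a ha b hb hab
    simp only [mem_Ioi] at ha hb
    simp only
    -- key: 2^(c/a) - 1 > (b/a) * (2^(c/b) - 1)
    have hy : 0 < c / b := div_pos hc hb
    have hxy : c / b < c / a := div_lt_div_of_pos_left hc ha hab
    have hk := key_slope L hL hy hxy
    -- hk : (c/a) * (exp (L*(c/b)) - 1) < (c/b) * (exp (L*(c/a)) - 1)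
    have hY : 0 < (2:ℝ) ^ (c / b) - 1 := by
      rw [hrw]
      have hpos : (0:ℝ) < L * (c / b) := by positivity
      have := Real.exp_lt_exp.2 hpos
      rw [Real.exp_zero] at this
      linarith
    have hkey : (b / a) * ((2:ℝ) ^ (c / b) - 1) < (2:ℝ) ^ (c / a) - 1 := by
      rw [hrw, hrw]
      have h1 : (c / a) * (Real.exp (L * (c / b)) - 1)
          < (c / b) * (Real.exp (L * (c / a)) - 1) := hk
      rw [div_mul_eq_mul_div, div_mul_eq_mul_div] at h1
      have hb' : b ≠ 0 := ne_of_gt hb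
      have ha' : a ≠ 0 := ne_of_gt ha
      rw [div_lt_div_iff₀ ha hb] at h1
      rw [div_mul_eq_mul_div, div_lt_iff₀ ha]
      nlinarith
    have hXpos : (0:ℝ) < (b / a) * ((2:ℝ) ^ (c / b) - 1) := by positivity
    have hsq : ((b / a) * ((2:ℝ) ^ (c / b) - 1)) ^ 2 < ((2:ℝ) ^ (c / a) - 1) ^ 2 :=
      pow_lt_pow_left₀ hkey (le_of_lt hXpos) (by norm_num)
    have h5 : a * ((b / a) * ((2:ℝ) ^ (c / b) - 1)) ^ 2 < a * ((2:ℝ) ^ (c / a) - 1) ^ 2 :=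
      (mul_lt_mul_iff_right₀ ha).2 hsq
    have h6 : a * ((b / a) * ((2:ℝ) ^ (c / b) - 1)) ^ 2
        = (b ^ 2 / a) * ((2:ℝ) ^ (c / b) - 1) ^ 2 := by
      field_simp
    have h7 : b * ((2:ℝ) ^ (c / b) - 1) ^ 2 ≤ (b ^ 2 / a) * ((2:ℝ) ^ (c / b) - 1) ^ 2 := by
      have : b ≤ b ^ 2 / a := by
        rw [le_div_iff₀ ha]; nlinarith
      nlinarith [sq_nonneg ((2:ℝ) ^ (c / b) - 1)]
    calc b * ((2:ℝ) ^ (c / b) - 1) ^ 2 ≤ (b ^ 2 / a) * ((2:ℝ) ^ (c / b) - 1) ^ 2 := h7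
      _ = a * ((b / a) * ((2:ℝ) ^ (c / b) - 1)) ^ 2 := h6.symm
      _ < a * ((2:ℝ) ^ (c / a) - 1) ^ 2 := h5
  · -- blow up at 0⁺ : h α ≥ (L*c)^2 / α
    have hbound : ∀ α ∈ Ioi (0:ℝ), (L * c) ^ 2 / α ≤ α * ((2:ℝ) ^ (c / α) - 1) ^ 2 := by
      intro α hα
      simp only [mem_Ioi] at hα
      have h1 : L * (c / α) ≤ (2:ℝ) ^ (c / α) - 1 := by
        rw [hrw]; linarith [Real.add_one_le_exp (L * (c / α))]
      have h0 : 0 ≤ L * (c / α) := by positivity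
      have h2 : (L * (c / α)) ^ 2 ≤ ((2:ℝ) ^ (c / α) - 1) ^ 2 :=
        pow_le_pow_left₀ h0 h1 2
      have h3 : α * (L * (c / α)) ^ 2 = (L * c) ^ 2 / α := by
        field_simp
      nlinarith
    have htend : Tendsto (fun α : ℝ => (L * c) ^ 2 / α) (nhdsWithin 0 (Ioi 0)) atTop := by
      have : Tendsto (fun α : ℝ => α⁻¹) (nhdsWithin 0 (Ioi 0)) atTop := tendsto_inv_nhdsGT_zero
      have hpos : (0:ℝ) < (L * c) ^ 2 := by positivity
      simpa [div_eq_mul_inv] using this.const_mul_atTop hpos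
    refine tendsto_atTop_mono' _ ?_ htend
    filter_upwards [self_mem_nhdsWithin] with α hα using hbound α hα
  · -- vanish at ∞: squeeze 0 ≤ h α ≤ (2*L*c)^2 / α for α ≥ max c 1
    have htend : Tendsto (fun α : ℝ => (2 * L * c) ^ 2 / α) atTop (nhds 0) := by
      have h := tendsto_inv_atTop_zero.const_mul ((2 * L * c) ^ 2)
      rw [mul_zero] at h
      simpa [div_eq_mul_inv] using h
    refine tendsto_of_tendsto_of_tendsto_of_le_of_le' tendsto_const_nhds htend ?_ ?_
    · filter_upwards [eventually_gt_atTop (0:ℝ)] with α hα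
      positivity
    · filter_upwards [eventually_ge_atTop (max c 1)] with α hα
      have hαc : c ≤ α := le_trans (le_max_left _ _) hα
      have hα1 : (1:ℝ) ≤ α := le_trans (le_max_right _ _) hα
      have hαpos : 0 < α := lt_of_lt_of_le one_pos hα1
      set t := c / α with ht
      have ht0 : 0 < t := div_pos hc hαpos
      have ht1 : t ≤ 1 := (div_le_one hαpos).2 hαc
      have hupper : (2:ℝ) ^ t - 1 ≤ 2 * L * t := by
        rw [hrw]
        have h1 : Real.exp (L * t) - 1 ≤ (L * t) * Real.exp (L * t) := by
          have := Real.add_one_le_exp (-(L * t))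
          have he : Real.exp (-(L * t)) * Real.exp (L * t) = 1 := by
            rw [← Real.exp_add]; simp
          nlinarith [Real.exp_pos (L * t)]
        have h2 : Real.exp (L * t) ≤ 2 := by
          calc Real.exp (L * t) ≤ Real.exp L := Real.exp_le_exp.2 (by nlinarith)
            _ = 2 := Real.exp_log (by norm_num)
        nlinarith [Real.exp_pos (L * t), mul_nonneg hL.le ht0.le]
      have hlow : 0 ≤ (2:ℝ) ^ t - 1 := by
        rw [hrw]; nlinarith [Real.add_one_le_exp (L * t), ht0.le, hL.le,
          mul_nonneg hL.le ht0.le]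
      have hsq : ((2:ℝ) ^ t - 1) ^ 2 ≤ (2 * L * t) ^ 2 := pow_le_pow_left₀ hlow hupper 2
      have hts : α * (2 * L * t) ^ 2 = (2 * L * c) ^ 2 / α := by
        rw [ht]; field_simp
      calc α * ((2:ℝ) ^ (c / α) - 1) ^ 2 = α * ((2:ℝ) ^ t - 1) ^ 2 := by rw [ht]
        _ ≤ α * (2 * L * t) ^ 2 := by nlinarith
        _ = (2 * L * c) ^ 2 / α := hts
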